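/- Let G be a finite simple graph with Laplacian L(G), and let E_cs be an edge contraction set with edge contraction partition π such that the contraction G_r = G ⫽ E_cs is edge-matching. Let p_π : ℝ^r → ℝ^n be the partition lifting assigning to each vertex of G the value of its cell. Then for all nonzero x̃ ∈ ℝ^r, the Laplacian Rayleigh quotient satisfies R(L(G), p_π(x̃)) ≤ R(L(G_r), x̃), where R(L(H), x) = (∑_{{u,v} ∈ E(H)} (x_u − x_v)²) / (∑_{v} x_v²). -/

import Mathlib

/-- The simple graph contraction of `G` over the partition of its vertex set given by the
fibers of `f` (cells are fibers): distinct cells are adjacent iff some pair of their members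
is adjacent in `G` (self-loops and duplicate edges removed). -/
def contraction {V W : Type*} (G : SimpleGraph V) (f : V → W) : SimpleGraph W where
  Adj i j := i ≠ j ∧ ∃ u v, f u = i ∧ f v = j ∧ G.Adj u v
  symm := ⟨fun _ _ ⟨hne, u, v, hu, hv, h⟩ => ⟨hne.symm, v, u, hv, hu, h.symm⟩⟩
  loopless := ⟨fun _ ⟨h, _⟩ => h rfl⟩

/-- The edge-based contraction `G ⫽ E_cs`: the contraction of `G` over the partition of
`V(G)` into connected components of the graph `(V(G), E_cs)`. -/
def contractionE {V : Type*} (G : SimpleGraph V) (Ecs : Set (Sym2 V)) :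
    SimpleGraph (SimpleGraph.fromEdgeSet Ecs).ConnectedComponent :=
  contraction G (SimpleGraph.fromEdgeSet Ecs).connectedComponentMk

/-- The Laplacian Rayleigh quotient of a graph:
`R(L(H), x) = (∑_{{u,v} ∈ E(H)} (x_u − x_v)²) / (∑_v x_v²)`. -/
noncomputable def lapR {V : Type*} (H : SimpleGraph V) (x : V → ℝ) : ℝ :=
  (∑ᶠ e ∈ H.edgeSet, Sym2.lift ⟨fun u v => (x u - x v) ^ 2, fun u v => by ring⟩ e) /
    (∑ᶠ v, x v ^ 2)

/-- Edge weight `(x u - x v)^2` as a function on `Sym2 V`. -/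
noncomputable def w2 {V : Type*} (x : V → ℝ) : Sym2 V → ℝ :=
  Sym2.lift ⟨fun u v => (x u - x v) ^ 2, fun u v => by ring⟩

lemma lapR_eq {V : Type*} (H : SimpleGraph V) (x : V → ℝ) :
    lapR H x = (∑ᶠ e ∈ H.edgeSet, w2 x e) / (∑ᶠ v, x v ^ 2) := rfl

/-- If the contraction `G_r = G ⫽ E_cs` is edge-matching, then for every
nonzero `x̃ : ℝ^r`, the partition lifting `p_π(x̃)` (constant on cells) satisfies
`R(L(G), p_π(x̃)) ≤ R(L(G_r), x̃)`. -/
theorem lapR_partition_lift_le {n : ℕ} (G : SimpleGraph (Fin n))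
    (Ecs : Set (Sym2 (Fin n))) (hE : Ecs ⊆ G.edgeSet)
    (hem : Nat.card (G.edgeSet \ Ecs : Set (Sym2 (Fin n))) =
      Nat.card (contractionE G Ecs).edgeSet)
    (xt : (SimpleGraph.fromEdgeSet Ecs).ConnectedComponent → ℝ) (hxt : xt ≠ 0) :
    lapR G (fun v => xt ((SimpleGraph.fromEdgeSet Ecs).connectedComponentMk v)) ≤
      lapR (contractionE G Ecs) xt := by
  classical
  have hfin : Finite (SimpleGraph.fromEdgeSet Ecs).ConnectedComponent :=
    Finite.of_surjective (SimpleGraph.fromEdgeSet Ecs).connectedComponentMk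
      fun c => c.exists_rep
  have : Fintype (SimpleGraph.fromEdgeSet Ecs).ConnectedComponent := Fintype.ofFinite _
  set f := (SimpleGraph.fromEdgeSet Ecs).connectedComponentMk with hfdef
  set px : Fin n → ℝ := fun v => xt (f v) with hpxdef
  set EG := G.edgeSet.toFinite.toFinset with hEGdef
  set DF := (G.edgeSet \ Ecs).toFinite.toFinset with hDFdef
  set Er := (contractionE G Ecs).edgeSet.toFinite.toFinset with hErdef
  have hsame : ∀ e ∈ Ecs, ∀ u v : Fin n, e = s(u, v) → f u = f v := by
    intro e he u v hev
    subst hev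
    have huv : u ≠ v := G.ne_of_adj (G.mem_edgeSet.mp (hE he))
    have hadj : (SimpleGraph.fromEdgeSet Ecs).Adj u v := by
      rw [SimpleGraph.fromEdgeSet_adj]; exact ⟨he, huv⟩
    exact SimpleGraph.ConnectedComponent.sound hadj.reachable
  have hNG : ∑ e ∈ EG, w2 px e = ∑ e ∈ DF, w2 px e := by
    refine (Finset.sum_subset ?_ ?_).symm
    · intro e he
      simp only [hDFdef, hEGdef, Set.Finite.mem_toFinset, Set.mem_diff] at he ⊢
      exact he.1
    · intro e heEG heD
      simp only [hDFdef, hEGdef, Set.Finite.mem_toFinset, Set.mem_diff, not_and,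
        not_not] at heEG heD
      have hecs : e ∈ Ecs := heD heEG
      induction e using Sym2.ind with
      | _ u v =>
        have := hsame _ hecs u v rfl
        simp [w2, hpxdef, this]
  set φ : Sym2 (Fin n) → Sym2 (SimpleGraph.fromEdgeSet Ecs).ConnectedComponent :=
    Sym2.map f with hφdef
  have hsurj : Er ⊆ DF.image φ := by
    intro e' he'
    simp only [hErdef, Set.Finite.mem_toFinset] at he'
    induction e' using Sym2.ind with
    | _ i j =>
      rw [SimpleGraph.mem_edgeSet] at he'
      obtain ⟨hne, u, v, hu, hv, hadj⟩ := he'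
      have hnotE : s(u, v) ∉ Ecs := fun hc => hne (hu ▸ hv ▸ hsame _ hc u v rfl)
      refine Finset.mem_image.2 ⟨s(u, v), ?_, ?_⟩
      · simp only [hDFdef, Set.Finite.mem_toFinset, Set.mem_diff]
        exact ⟨hadj, hnotE⟩
      · show Sym2.map f s(u, v) = s(i, j)
        rw [Sym2.map_pair_eq, show f u = i from hu, show f v = j from hv]
  have hcard : DF.card = Er.card := by
    have h1 : Nat.card (G.edgeSet \ Ecs : Set (Sym2 (Fin n))) = DF.card := by
      rw [Nat.card_coe_set_eq, Set.ncard_eq_toFinset_card _ (G.edgeSet \ Ecs).toFinite]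
    have h2 : Nat.card (contractionE G Ecs).edgeSet = Er.card := by
      rw [Nat.card_coe_set_eq,
        Set.ncard_eq_toFinset_card _ (contractionE G Ecs).edgeSet.toFinite]
    rw [← h1, ← h2, hem]
  have himg : DF.image φ = Er := by
    refine (Finset.eq_of_subset_of_card_le hsurj ?_).symm
    exact le_trans Finset.card_image_le (le_of_eq hcard)
  have hinj : Set.InjOn φ DF := by
    rw [← Finset.card_image_iff, himg, hcard]
  have hw'φ : ∀ e, w2 xt (φ e) = w2 px e := by
    intro e
    induction e using Sym2.ind with
    | _ u v => simp [hφdef, w2, hpxdef]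
  have hN : ∑ e ∈ EG, w2 px e = ∑ e' ∈ Er, w2 xt e' := by
    rw [hNG, ← himg, Finset.sum_image fun a ha b hb h => hinj ha hb h]
    exact Finset.sum_congr rfl fun e _ => (hw'φ e).symm
  have hfsurj : Function.Surjective f := fun c => c.exists_rep
  have hD : ∑ c, xt c ^ 2 ≤ ∑ v, px v ^ 2 := by
    have h1 : ∑ c, xt c ^ 2 =
        ∑ v ∈ Finset.univ.image (Function.surjInv hfsurj), px v ^ 2 := by
      rw [Finset.sum_image fun a _ b _ h => Function.injective_surjInv hfsurj h]
      refine Finset.sum_congr rfl fun c _ => ?_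
      rw [hpxdef]
      simp [Function.surjInv_eq hfsurj]
    rw [h1]
    exact Finset.sum_le_sum_of_subset_of_nonneg (Finset.subset_univ _)
      fun v _ _ => sq_nonneg _
  have hDr : 0 < ∑ c, xt c ^ 2 := by
    obtain ⟨c, hc⟩ := Function.ne_iff.1 hxt
    exact Finset.sum_pos' (fun i _ => sq_nonneg _)
      ⟨c, Finset.mem_univ c, sq_pos_of_ne_zero hc⟩
  have hNnonneg : 0 ≤ ∑ e' ∈ Er, w2 xt e' := by
    refine Finset.sum_nonneg fun e _ => ?_
    induction e using Sym2.ind with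
    | _ u v => simp only [w2, Sym2.lift_mk]; positivity
  rw [lapR_eq, lapR_eq]
  have hnum1 : (∑ᶠ e ∈ G.edgeSet, w2 px e) = ∑ e ∈ EG, w2 px e := by
    rw [hEGdef, ← finsum_mem_coe_finset, Set.Finite.coe_toFinset]
  have hnum2 : (∑ᶠ e ∈ (contractionE G Ecs).edgeSet, w2 xt e) = ∑ e ∈ Er, w2 xt e := by
    rw [hErdef, ← finsum_mem_coe_finset, Set.Finite.coe_toFinset]
  have hden1 : (∑ᶠ v : Fin n, px v ^ 2) = ∑ v, px v ^ 2 := finsum_eq_sum_of_fintype _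
  have hden2 : (∑ᶠ c, xt c ^ 2) = ∑ c, xt c ^ 2 := finsum_eq_sum_of_fintype _
  rw [hnum1, hnum2, hden1, hden2, hN]
  exact div_le_div_of_nonneg_left hNnonneg hDr hD
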